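/- The vector ρ₄ := e_L + e_{25} + e_{34} lies in Γ^∨, spans an extremal ray of Γ^∨, and satisfies ⟨K, ρ₄⟩ = −2; hence ρ₄ is a coextremal ray of M̄_{0,6}. (Geometrically, ρ₄ is the class of a generic fiber of the conic bundle (φ_{ij}, φ_{kl}) : M̄_{0,6} → ℙ¹ × ℙ¹ formed from two forgetful maps for disjoint pairs {i,j} and {k,l} of marked points.) -/

import Mathlib

noncomputable section

/-- Index in `Fin 16` of the exceptional class `E_{ab}` attached to a pair of points
(points written `0`-based as elements of `Fin 5`, assuming `a < b`):
`(0,1) ↦ 6, (0,2) ↦ 7, …, (3,4) ↦ 15`. -/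
def pairIdx : ℕ → ℕ → Fin 16
  | 0, 1 => 6
  | 0, 2 => 7
  | 0, 3 => 8
  | 0, 4 => 9
  | 1, 2 => 10
  | 1, 3 => 11
  | 1, 4 => 12
  | 2, 3 => 13
  | 2, 4 => 14
  | 3, 4 => 15
  | _, _ => 0

/-- The coordinate vector `e_L` (the class `L`). -/
def eL : Fin 16 → ℝ := Pi.single 0 1

/-- The coordinate vector `e_i` for the point `i ∈ {1,…,5}` (represented `0`-based
by `i : Fin 5`). -/
def eP (i : Fin 5) : Fin 16 → ℝ := Pi.single ⟨i.val + 1, by omega⟩ 1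

/-- The coordinate vector `e_{ab}` for a 2-element subset `{a,b} ⊂ {1,…,5}`
(represented `0`-based); symmetric in `a` and `b`. -/
def eE (a b : Fin 5) : Fin 16 → ℝ :=
  Pi.single (if a.val < b.val then pairIdx a.val b.val else pairIdx b.val a.val) 1

/-- The standard inner product on `ℝ¹⁶`. -/
def ip (x y : Fin 16 → ℝ) : ℝ := ∑ i, x i * y i

def Distinct3 (k l m : Fin 5) : Prop := k ≠ l ∧ k ≠ m ∧ l ≠ m

def Distinct5 (i j k l m : Fin 5) : Prop :=
  i ≠ j ∧ i ≠ k ∧ i ≠ l ∧ i ≠ m ∧ j ≠ k ∧ j ≠ l ∧ j ≠ m ∧ k ≠ l ∧ k ≠ m ∧ l ≠ m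

/-- The 40 classes: 25 boundary divisors and 15 fixed-point divisors `F_σ` of `M̄₀₆`. -/
def Gamma : Set (Fin 16 → ℝ) :=
  {v | (∃ i : Fin 5, v = eP i) ∨
       (∃ a b : Fin 5, a ≠ b ∧ v = eE a b) ∨
       (∃ k l m : Fin 5, Distinct3 k l m ∧
          v = eL - eP k - eP l - eP m - eE k l - eE k m - eE l m) ∨
       (∃ j a b c d : Fin 5, Distinct5 j a b c d ∧
          v = (2 : ℝ) • eL - (∑ i, eP i) - eE a c - eE a d - eE b c - eE b d)}

/-- The dual cone `Γ^∨ = {v : ⟨g,v⟩ ≥ 0 for all g ∈ Γ}`. -/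
def GammaDual : Set (Fin 16 → ℝ) := {v | ∀ gv ∈ Gamma, 0 ≤ ip gv v}
/-- The canonical class `K = -4e_L + 2(e_1 + ⋯ + e_5) + Σ_{{a,b}} e_{ab}` of `M̄₀₆`. -/
def Kcl : Fin 16 → ℝ :=
  -((4 : ℝ) • eL) + (2 : ℝ) • (∑ i, eP i) +
    ∑ a : Fin 5, ∑ b : Fin 5, if a < b then eE a b else 0

/-- A nonzero `ρ` spans an extremal ray of the convex cone `C` if `ρ ∈ C` and
whenever `v₁, v₂ ∈ C` with `v₁ + v₂ ∈ ℝ₊·ρ`, both `v₁` and `v₂` lie in `ℝ₊·ρ`. -/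
def SpansExtremalRay (C : Set (Fin 16 → ℝ)) (ρ : Fin 16 → ℝ) : Prop :=
  ρ ≠ 0 ∧ ρ ∈ C ∧ ∀ v₁ v₂, v₁ ∈ C → v₂ ∈ C →
    (∃ t : ℝ, 0 ≤ t ∧ v₁ + v₂ = t • ρ) →
    ((∃ t : ℝ, 0 ≤ t ∧ v₁ = t • ρ) ∧ (∃ t : ℝ, 0 ≤ t ∧ v₂ = t • ρ))
/-- `ρ₄ = e_L + e₂₅ + e₃₄` (pairs written `1`-based; here `0`-based in `Fin 5`). -/
def ρ₄ : Fin 16 → ℝ := eL + eE 1 4 + eE 2 3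

lemma ip_single (j : Fin 16) (v : Fin 16 → ℝ) : ip (Pi.single j 1) v = v j := by
  simp [ip, Pi.single_apply, ite_mul]

lemma rho_eq : ρ₄ = Pi.single 0 1 + Pi.single 12 1 + Pi.single 13 1 := by
  unfold ρ₄ eL eE
  norm_num [pairIdx, show ((1:Fin 5):ℕ) = 1 from rfl, show ((2:Fin 5):ℕ) = 2 from rfl,
    show ((3:Fin 5):ℕ) = 3 from rfl, show ((4:Fin 5):ℕ) = 4 from rfl]

lemma ip_rho (g : Fin 16 → ℝ) : ip g ρ₄ = g 0 + g 12 + g 13 := by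
  simp (config := { decide := true }) [ip, rho_eq, Pi.single_apply, Fin.sum_univ_succ]
  ring

def Gv (x y : Fin 5) : ℝ := eE x y 0 + eE x y 12 + eE x y 13

lemma eP_z (i : Fin 5) : eP i 0 = 0 ∧ eP i 12 = 0 ∧ eP i 13 = 0 := by
  fin_cases i <;> refine ⟨?_, ?_, ?_⟩ <;>
    simp (config := { decide := true }) [eP, Pi.single_apply]

lemma eL_z : eL 0 = 1 ∧ eL 12 = 0 ∧ eL 13 = 0 := by
  refine ⟨?_, ?_, ?_⟩ <;> simp (config := { decide := true }) [eL, Pi.single_apply]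

lemma sumP_z : (∑ i, eP i) 0 = 0 ∧ (∑ i, eP i) 12 = 0 ∧ (∑ i, eP i) 13 = 0 := by
  refine ⟨?_, ?_, ?_⟩ <;> rw [Finset.sum_apply] <;> apply Finset.sum_eq_zero <;>
    intro i _
  · exact (eP_z i).1
  · exact (eP_z i).2.1
  · exact (eP_z i).2.2

lemma Gv_nonneg (x y : Fin 5) : 0 ≤ Gv x y := by
  unfold Gv eE
  rw [Pi.single_apply, Pi.single_apply, Pi.single_apply]
  split_ifs <;> norm_num

lemma key3 (k l m : Fin 5) (h1 : k ≠ l) (h2 : k ≠ m) (h3 : l ≠ m) :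
    Gv k l + Gv k m + Gv l m ≤ 1 := by
  fin_cases k <;> fin_cases l <;> fin_cases m <;>
    simp_all (config := { decide := true }) [Gv, eE, pairIdx, Pi.single_apply]

lemma key2 (x c d : Fin 5) (hxc : x ≠ c) (hxd : x ≠ d) (hcd : c ≠ d) :
    Gv x c + Gv x d ≤ 1 := by
  fin_cases x <;> fin_cases c <;> fin_cases d <;>
    simp_all (config := { decide := true }) [Gv, eE, pairIdx, Pi.single_apply]

lemma rho_dual : ρ₄ ∈ GammaDual := by
  rintro g (⟨i, rfl⟩ | ⟨a, b, hab, rfl⟩ | ⟨k, l, m, ⟨h1, h2, h3⟩, rfl⟩ |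
    ⟨j, a, b, c, d, ⟨_, _, _, _, _, hac, had, hbc, hbd, hcd⟩, rfl⟩) <;> rw [ip_rho]
  · obtain ⟨p, q, r⟩ := eP_z i; linarith
  · have := Gv_nonneg a b; unfold Gv at this; linarith
  · have hk := key3 k l m h1 h2 h3
    unfold Gv at hk
    obtain ⟨p1, p2, p3⟩ := eP_z k
    obtain ⟨q1, q2, q3⟩ := eP_z l
    obtain ⟨r1, r2, r3⟩ := eP_z m
    obtain ⟨l1, l2, l3⟩ := eL_z
    simp only [Pi.sub_apply]
    linarith
  · have k1 := key2 a c d hac had hcd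
    have k2 := key2 b c d hbc hbd hcd
    unfold Gv at k1 k2
    obtain ⟨s1, s2, s3⟩ := sumP_z
    obtain ⟨l1, l2, l3⟩ := eL_z
    simp only [Pi.sub_apply, Pi.smul_apply, smul_eq_mul]
    linarith

lemma ip_K : ip Kcl ρ₄ = -2 := by
  rw [ip_rho]
  simp (config := { decide := true }) [Kcl, eL, eP, eE, pairIdx, Pi.single_apply,
    Fin.sum_univ_succ, Finset.sum_apply, Pi.add_apply, Pi.smul_apply, Pi.neg_apply]
  norm_num

lemma ip_sub (x y v : Fin 16 → ℝ) : ip (x - y) v = ip x v - ip y v := by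
  simp [ip, sub_mul, Finset.sum_sub_distrib]

lemma ip_add (x y z : Fin 16 → ℝ) : ip x (y + z) = ip x y + ip x z := by
  simp [ip, mul_add, Finset.sum_add_distrib]

lemma ip_smul (x : Fin 16 → ℝ) (t : ℝ) (y : Fin 16 → ℝ) : ip x (t • y) = t * ip x y := by
  simp only [ip, Pi.smul_apply, smul_eq_mul, Finset.mul_sum]
  exact Finset.sum_congr rfl fun i _ => by ring

lemma pins (v : Fin 16 → ℝ) (hv : v ∈ GammaDual)
    (hz : ∀ g ∈ Gamma, ip g ρ₄ = 0 → ip g v = 0) :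
    ∃ s : ℝ, 0 ≤ s ∧ v = s • ρ₄ := by
  have zP : ∀ i : Fin 5, ip (eP i) ρ₄ = 0 := fun i => by
    rw [ip_rho]; obtain ⟨a, b, c⟩ := eP_z i; linarith
  have hP : ∀ i : Fin 5, ip (eP i) v = 0 := fun i => hz (eP i) (Or.inl ⟨i, rfl⟩) (zP i)
  have h1 : v 1 = 0 := by
    have := hP 0
    simpa (config := { decide := true }) [eP, ip_single] using this
  have h2 : v 2 = 0 := by
    have := hP 1
    simpa (config := { decide := true }) [eP, ip_single] using this
  have h3 : v 3 = 0 := by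
    have := hP 2
    simpa (config := { decide := true }) [eP, ip_single] using this
  have h4 : v 4 = 0 := by
    have := hP 3
    simpa (config := { decide := true }) [eP, ip_single] using this
  have h5 : v 5 = 0 := by
    have := hP 4
    simpa (config := { decide := true }) [eP, ip_single] using this
  have hE : ∀ a b : Fin 5, a ≠ b → ip (eE a b) ρ₄ = 0 → ip (eE a b) v = 0 :=
    fun a b hab h0 => hz (eE a b) (Or.inr (Or.inl ⟨a, b, hab, rfl⟩)) h0
  have h6 : v 6 = 0 := by
    have := hE 0 1 (by decide) (by
      rw [ip_rho]; simp (config := { decide := true }) [eE, pairIdx, Pi.single_apply])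
    simpa (config := { decide := true }) [eE, pairIdx, ip_single] using this
  have h7 : v 7 = 0 := by
    have := hE 0 2 (by decide) (by
      rw [ip_rho]; simp (config := { decide := true }) [eE, pairIdx, Pi.single_apply])
    simpa (config := { decide := true }) [eE, pairIdx, ip_single] using this
  have h8 : v 8 = 0 := by
    have := hE 0 3 (by decide) (by
      rw [ip_rho]; simp (config := { decide := true }) [eE, pairIdx, Pi.single_apply])
    simpa (config := { decide := true }) [eE, pairIdx, ip_single] using this
  have h9 : v 9 = 0 := by
    have := hE 0 4 (by decide) (by
      rw [ip_rho]; simp (config := { decide := true }) [eE, pairIdx, Pi.single_apply])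
    simpa (config := { decide := true }) [eE, pairIdx, ip_single] using this
  have h10 : v 10 = 0 := by
    have := hE 1 2 (by decide) (by
      rw [ip_rho]; simp (config := { decide := true }) [eE, pairIdx, Pi.single_apply])
    simpa (config := { decide := true }) [eE, pairIdx, ip_single] using this
  have h11 : v 11 = 0 := by
    have := hE 1 3 (by decide) (by
      rw [ip_rho]; simp (config := { decide := true }) [eE, pairIdx, Pi.single_apply])
    simpa (config := { decide := true }) [eE, pairIdx, ip_single] using this
  have h14 : v 14 = 0 := by
    have := hE 2 4 (by decide) (by
      rw [ip_rho]; simp (config := { decide := true }) [eE, pairIdx, Pi.single_apply])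
    simpa (config := { decide := true }) [eE, pairIdx, ip_single] using this
  have h15 : v 15 = 0 := by
    have := hE 3 4 (by decide) (by
      rw [ip_rho]; simp (config := { decide := true }) [eE, pairIdx, Pi.single_apply])
    simpa (config := { decide := true }) [eE, pairIdx, ip_single] using this
  have e1 : v 0 - v 1 - v 2 - v 5 - v 6 - v 9 - v 12 = 0 := by
    have := hz (eL - eP 0 - eP 1 - eP 4 - eE 0 1 - eE 0 4 - eE 1 4)
      (Or.inr (Or.inr (Or.inl ⟨0, 1, 4, ⟨by decide, by decide, by decide⟩, rfl⟩)))
      (by rw [ip_rho]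
          simp (config := { decide := true }) [Pi.sub_apply, eL, eP, eE, pairIdx,
            Pi.single_apply])
    simpa (config := { decide := true }) [ip_sub, eL, eP, eE, pairIdx, ip_single] using this
  have e2 : v 0 - v 1 - v 3 - v 4 - v 7 - v 8 - v 13 = 0 := by
    have := hz (eL - eP 0 - eP 2 - eP 3 - eE 0 2 - eE 0 3 - eE 2 3)
      (Or.inr (Or.inr (Or.inl ⟨0, 2, 3, ⟨by decide, by decide, by decide⟩, rfl⟩)))
      (by rw [ip_rho]
          simp (config := { decide := true }) [Pi.sub_apply, eL, eP, eE, pairIdx,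
            Pi.single_apply])
    simpa (config := { decide := true }) [ip_sub, eL, eP, eE, pairIdx, ip_single] using this
  have hpos : 0 ≤ v 12 := by
    have := hv (eE 1 4) (Or.inr (Or.inl ⟨1, 4, by decide, rfl⟩))
    simpa (config := { decide := true }) [eE, pairIdx, ip_single] using this
  refine ⟨v 0, by linarith, ?_⟩
  funext i
  fin_cases i <;>
    simp (config := { decide := true }) [rho_eq, Pi.single_apply, Pi.add_apply,
      Pi.smul_apply] <;>
    linarith

lemma rho_ne : ρ₄ ≠ 0 := by
  intro h
  have h0 : ρ₄ 0 = 0 := by rw [h]; rfl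
  rw [rho_eq] at h0
  simp (config := { decide := true }) [Pi.single_apply, Pi.add_apply] at h0

theorem rho4_coextremal :
    ρ₄ ∈ GammaDual ∧ SpansExtremalRay GammaDual ρ₄ ∧ ip Kcl ρ₄ = -2 := by
  refine ⟨rho_dual, ⟨rho_ne, rho_dual, ?_⟩, ip_K⟩
  rintro v₁ v₂ h₁ h₂ ⟨t, ht, hsum⟩
  have key : ∀ g ∈ Gamma, ip g ρ₄ = 0 → ip g v₁ = 0 ∧ ip g v₂ = 0 := by
    intro g hg h0
    have a1 := h₁ g hg
    have a2 := h₂ g hg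
    have hs : ip g v₁ + ip g v₂ = 0 := by
      have h' : ip g (v₁ + v₂) = ip g (t • ρ₄) := by rw [hsum]
      rw [ip_add, ip_smul, h0, mul_zero] at h'
      exact h'
    exact ⟨by linarith, by linarith⟩
  obtain ⟨s1, hs1, he1⟩ := pins v₁ h₁ fun g hg h0 => (key g hg h0).1
  obtain ⟨s2, hs2, he2⟩ := pins v₂ h₂ fun g hg h0 => (key g hg h0).2
  exact ⟨⟨s1, hs1, he1⟩, ⟨s2, hs2, he2⟩⟩
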